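/- Let (V,C,u) be an order unit space with a smooth cone, η ∈ ∂C ∖ {0}, and φ the state with φ(η) = 0. Suppose z ∈ C with φ(z) > 0, and for 0 < s ≤ 1 set y_s = (1−s)η + su and z_s = (1−s)z + su (both in C°). Then lim_{s→0⁺} M(z_s/y_s) · M(u/y_s)⁻¹ = φ(z). -/

import Mathlib

open Set Filter Topology

variable {V : Type*} [NormedAddCommGroup V] [NormedSpace ℝ V]

/-- `(V, C, u)` is an order unit space whose norm is the order unit norm of `(C, u)`:
`C` is an Archimedean cone and `u` is an order unit of it. -/
structure IsOrderUnitSpace (C : Set V) (u : V) : Prop where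
  convex : Convex ℝ C
  smul_mem : ∀ l : ℝ, 0 ≤ l → ∀ x ∈ C, l • x ∈ C
  salient : C ∩ (-C) = {0}
  archimedean : ∀ x : V, ∀ y ∈ C, (∀ n : ℕ, 0 < n → y - (n : ℝ) • x ∈ C) → -x ∈ C
  unit_mem : u ∈ C
  order_unit : ∀ x : V, ∃ l : ℝ, 0 ≤ l ∧ l • u - x ∈ C
  norm_eq : ∀ x : V, ‖x‖ = sInf {l : ℝ | 0 < l ∧ x + l • u ∈ C ∧ l • u - x ∈ C}

/-- `M(x/y) = inf {β > 0 : x ≤_C β y}`. -/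
noncomputable def Mratio (C : Set V) (x y : V) : ℝ :=
  sInf {b : ℝ | 0 < b ∧ b • y - x ∈ C}

/-- The cone `C` is strictly convex: the open segment between any two linearly
independent boundary points lies in the interior. -/
def StrictlyConvexCone (C : Set V) : Prop :=
  ∀ x ∈ frontier C, ∀ y ∈ frontier C, LinearIndependent ℝ ![x, y] →
    openSegment ℝ x y ⊆ interior C

/-- `g` is antihomogeneous on the interior of `C`: `g (λ x) = λ⁻¹ g x`. -/
def IsAntihomogeneous (C : Set V) (g : V → V) : Prop :=
  ∀ l : ℝ, 0 < l → ∀ x ∈ interior C, g (l • x) = l⁻¹ • g x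

/-- `g` is an order-antimorphism of the interior of `C`: `x ≤_C y ↔ g y ≤_C g x`. -/
def IsOrderAntimorphism (C : Set V) (g : V → V) : Prop :=
  ∀ x ∈ interior C, ∀ y ∈ interior C, (y - x ∈ C ↔ g x - g y ∈ C)

/-- A state of `(V, C, u)`: a positive linear functional with `φ u = 1`. -/
def IsState (C : Set V) (u : V) (φ : V →ₗ[ℝ] ℝ) : Prop :=
  (∀ x ∈ C, 0 ≤ φ x) ∧ φ u = 1

/-- The cone `C` is smooth: every nonzero boundary point has a unique supporting
state. -/
def SmoothCone (C : Set V) (u : V) : Prop :=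
  ∀ η ∈ frontier C, η ≠ 0 → ∃! φ : V →ₗ[ℝ] ℝ, IsState C u φ ∧ φ η = 0

namespace IsOrderUnitSpace

variable {C : Set V} {u : V} (h : IsOrderUnitSpace C u)

include h

lemma zero_mem : (0 : V) ∈ C := by
  have := h.smul_mem 0 le_rfl u h.unit_mem
  simpa using this

lemma add_mem {a b : V} (ha : a ∈ C) (hb : b ∈ C) : a + b ∈ C := by
  have := h.smul_mem 2 (by norm_num) _ (h.convex ha hb (by norm_num : (0:ℝ) ≤ 1/2)
    (by norm_num : (0:ℝ) ≤ 1/2) (by norm_num))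
  simpa [smul_add, smul_smul] using this

lemma normSet_nonempty (x : V) :
    {l : ℝ | 0 < l ∧ x + l • u ∈ C ∧ l • u - x ∈ C}.Nonempty := by
  obtain ⟨l₁, hl₁, h₁⟩ := h.order_unit x
  obtain ⟨l₂, hl₂, h₂⟩ := h.order_unit (-x)
  refine ⟨l₁ + l₂ + 1, ⟨by linarith, ?_, ?_⟩⟩
  · have : (l₂ • u - -x) + (l₁ + 1) • u ∈ C :=
      h.add_mem h₂ (h.smul_mem _ (by linarith) _ h.unit_mem)
    have e : (l₂ • u - -x) + (l₁ + 1) • u = x + (l₁ + l₂ + 1) • u := by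
      module
    rwa [e] at this
  · have : (l₁ • u - x) + (l₂ + 1) • u ∈ C :=
      h.add_mem h₁ (h.smul_mem _ (by linarith) _ h.unit_mem)
    have e : (l₁ • u - x) + (l₂ + 1) • u = (l₁ + l₂ + 1) • u - x := by
      module
    rwa [e] at this

lemma mem_of_norm_lt {x : V} {l : ℝ} (hl : ‖x‖ < l) :
    x + l • u ∈ C ∧ l • u - x ∈ C := by
  have hbdd : BddBelow {l : ℝ | 0 < l ∧ x + l • u ∈ C ∧ l • u - x ∈ C} :=
    ⟨0, fun a ha => le_of_lt ha.1⟩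
  rw [h.norm_eq x] at hl
  obtain ⟨l', hl', hl'lt⟩ := exists_lt_of_csInf_lt (h.normSet_nonempty x) hl
  obtain ⟨hl'0, h1, h2⟩ := hl'
  constructor
  · have : (x + l' • u) + (l - l') • u ∈ C :=
      h.add_mem h1 (h.smul_mem _ (by linarith) _ h.unit_mem)
    have e : (x + l' • u) + (l - l') • u = x + l • u := by
      module
    rwa [e] at this
  · have : (l' • u - x) + (l - l') • u ∈ C :=
      h.add_mem h2 (h.smul_mem _ (by linarith) _ h.unit_mem)
    have e : (l' • u - x) + (l - l') • u = l • u - x := by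
      module
    rwa [e] at this

lemma isClosed : IsClosed C := by
  refine isClosed_of_closure_subset (fun x hx => ?_)
  have key : ∀ ε : ℝ, 0 < ε → x + ε • u ∈ C := by
    intro ε hε
    obtain ⟨x', hx', hd⟩ := Metric.mem_closure_iff.1 hx ε hε
    have hnorm : ‖x - x'‖ < ε := by rwa [dist_eq_norm] at hd
    have := (h.mem_of_norm_lt hnorm).1
    have e : x' + ((x - x') + ε • u) = x + ε • u := by abel
    have := h.add_mem hx' this
    rwa [e] at this
  have harch : ∀ n : ℕ, 0 < n → u - (n : ℝ) • (-x) ∈ C := by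
    intro n hn
    have hn' : (0:ℝ) < n := Nat.cast_pos.2 hn
    have := h.smul_mem n hn'.le _ (key ((n:ℝ)⁻¹) (by positivity))
    have e : (n:ℝ) • (x + (n:ℝ)⁻¹ • u) = u - (n : ℝ) • (-x) := by
      rw [smul_add, smul_smul, mul_inv_cancel₀ hn'.ne', one_smul, smul_neg]
      abel
    rwa [e] at this
  have := h.archimedean (-x) u h.unit_mem harch
  simpa using this

lemma state_abs_le (φ : V →ₗ[ℝ] ℝ) (hφ : IsState C u φ) (x : V) : |φ x| ≤ ‖x‖ := by
  have key : ∀ l : ℝ, ‖x‖ < l → |φ x| ≤ l := by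
    intro l hl
    obtain ⟨h1, h2⟩ := h.mem_of_norm_lt hl
    have a1 := hφ.1 _ h1
    have a2 := hφ.1 _ h2
    simp only [map_add, map_sub, map_smul, hφ.2, smul_eq_mul, mul_one] at a1 a2
    rw [abs_le]; constructor <;> linarith
  by_contra hc
  push_neg at hc
  obtain ⟨l, hl1, hl2⟩ := exists_between hc
  exact absurd (key l hl1) (not_le.2 hl2)

end IsOrderUnitSpace

namespace IsOrderUnitSpace
variable {C : Set V} {u : V} (h : IsOrderUnitSpace C u)
include h

lemma pos_on_C_zero_at_u {g : V →L[ℝ] ℝ} (hg : ∀ a ∈ C, 0 ≤ g a) (hgu : g u = 0) :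
    ∀ v : V, g v = 0 := by
  intro v
  have key : ∀ l : ℝ, ‖v‖ < l → g v = 0 := by
    intro l hl
    obtain ⟨h1, h2⟩ := h.mem_of_norm_lt hl
    have a1 := hg _ h1
    have a2 := hg _ h2
    simp only [map_add, map_sub, map_smul, hgu, smul_eq_mul, mul_zero] at a1 a2
    linarith
  exact key (‖v‖ + 1) (by linarith)

lemma exists_state_neg {x : V} (hx : x ∉ C) :
    ∃ ψ : V →L[ℝ] ℝ, (∀ a ∈ C, 0 ≤ ψ a) ∧ ψ u = 1 ∧ ψ x < 0 := by
  obtain ⟨f, t, hfC, hfx⟩ := geometric_hahn_banach_closed_point h.convex h.isClosed hx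
  have ht0 : 0 < t := by have := hfC 0 h.zero_mem; simpa using this
  have hfle : ∀ a ∈ C, f a ≤ 0 := by
    intro a ha
    by_contra hc
    push_neg at hc
    obtain ⟨n, hn⟩ := exists_nat_gt (t / f a)
    have hna : ((n:ℝ)) • a ∈ C := h.smul_mem _ (Nat.cast_nonneg n) a ha
    have := hfC _ hna
    rw [map_smul, smul_eq_mul] at this
    have hlt : (n:ℝ) * f a < t := this
    have : (n:ℝ) < t / f a := (lt_div_iff₀ hc).2 (by linarith)
    linarith
  set g : V →L[ℝ] ℝ := -f with hg
  have hgC : ∀ a ∈ C, 0 ≤ g a := fun a ha => by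
    simp only [hg, ContinuousLinearMap.neg_apply]; linarith [hfle a ha]
  have hgx : g x < 0 := by
    simp only [hg, ContinuousLinearMap.neg_apply]; linarith
  have hgu : 0 < g u := by
    rcases lt_or_eq_of_le (hgC u h.unit_mem) with h' | h'
    · exact h'
    · exact absurd (h.pos_on_C_zero_at_u hgC h'.symm x) (ne_of_lt hgx)
  refine ⟨(g u)⁻¹ • g, fun a ha => ?_, ?_, ?_⟩
  · simp only [ContinuousLinearMap.smul_apply, smul_eq_mul]
    exact mul_nonneg (inv_nonneg.2 hgu.le) (hgC a ha)
  · simp [inv_mul_cancel₀ hgu.ne']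
  · simp only [ContinuousLinearMap.smul_apply, smul_eq_mul]
    exact mul_neg_of_pos_of_neg (inv_pos.2 hgu) hgx

end IsOrderUnitSpace

lemma exists_forall_smul_eta_add_mem {C : Set V} {u : V}
    (h : IsOrderUnitSpace C u) (hsm : SmoothCone C u)
    {η : V} (hη : η ∈ frontier C) (hη0 : η ≠ 0)
    {φ : V →ₗ[ℝ] ℝ} (hφ : IsState C u φ) (hφη : φ η = 0)
    {w : V} (hw : 0 < φ w) :
    ∃ t : ℝ, 0 < t ∧ ∀ t' ≥ t, t' • η + w ∈ C := by
  have hηC : η ∈ C := h.isClosed.frontier_subset hη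
  have mono : ∀ t t' : ℝ, t ≤ t' → t • η + w ∈ C → t' • η + w ∈ C := by
    intro t t' htt' hmem
    have := h.add_mem hmem (h.smul_mem (t' - t) (by linarith) η hηC)
    have e : (t • η + w) + (t' - t) • η = t' • η + w := by module
    rwa [e] at this
  suffices hs : ∃ t : ℝ, 0 < t ∧ t • η + w ∈ C by
    obtain ⟨t, ht0, htm⟩ := hs
    exact ⟨t, ht0, fun t' ht' => mono t t' ht' htm⟩
  by_contra hnot
  push_neg at hnot
  have hnot' : ∀ t : ℝ, 0 < t → t • η + w ∉ C := fun t ht => hnot t ht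
  -- build states
  set K : ℕ → Set (WeakDual ℝ V) := fun n =>
    {ψ | (∀ a ∈ C, 0 ≤ ψ a) ∧ ψ u = 1 ∧ ψ η ≤ 1 / (n + 1) ∧ ψ w ≤ 0} with hK
  have hKne : ∀ n : ℕ, (K n).Nonempty := by
    intro n
    set t : ℝ := (n + 1) * (‖w‖ + 1) with htdef
    have ht0 : 0 < t := by positivity
    obtain ⟨ψ, hψC, hψu, hψx⟩ := h.exists_state_neg (hnot' t ht0)
    have hstate : IsState C u (ψ.toLinearMap) := ⟨fun a ha => hψC a ha, hψu⟩
    have habs := h.state_abs_le ψ.toLinearMap hstate w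
    have hψw_ge : -‖w‖ ≤ ψ w := by
      have := abs_le.1 habs
      exact this.1
    have hψη : 0 ≤ ψ η := hψC η hηC
    have hsum : t * ψ η + ψ w < 0 := by
      have : ψ (t • η + w) = t * ψ η + ψ w := by
        simp [map_add, map_smul, smul_eq_mul]
      linarith [hψx, this ▸ hψx]
    have hψw : ψ w ≤ 0 := by nlinarith
    have hψηle : ψ η ≤ 1 / (n + 1) := by
      have h1 : t * ψ η < ‖w‖ + 1 := by linarith
      have h2 : ψ η < (‖w‖ + 1) / t := by
        rw [lt_div_iff₀ ht0]; linarith [h1]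
      have h3 : (‖w‖ + 1) / t = 1 / (n + 1) := by
        rw [htdef]; field_simp
      linarith [h2, h3 ▸ h2]
    exact ⟨ψ, hψC, hψu, hψηle, hψw⟩
  have hKdec : ∀ n : ℕ, K (n + 1) ⊆ K n := by
    intro n ψ hψ
    obtain ⟨h1, h2, h3, h4⟩ := hψ
    refine ⟨h1, h2, le_trans h3 ?_, h4⟩
    push_cast
    gcongr <;> linarith
  have hKcl : ∀ n : ℕ, IsClosed (K n) := by
    intro n
    have e : K n = (⋂ a ∈ C, {ψ : WeakDual ℝ V | 0 ≤ ψ a}) ∩ {ψ | ψ u = 1}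
        ∩ {ψ | ψ η ≤ 1 / (n + 1)} ∩ {ψ | ψ w ≤ 0} := by
      ext ψ; simp only [hK, mem_setOf_eq, mem_inter_iff, mem_iInter]; tauto
    rw [e]
    refine (((isClosed_biInter fun a _ =>
        isClosed_le continuous_const (WeakDual.eval_continuous a)).inter
        (isClosed_eq (WeakDual.eval_continuous u) continuous_const)).inter
        (isClosed_le (WeakDual.eval_continuous η) continuous_const)).inter
        (isClosed_le (WeakDual.eval_continuous w) continuous_const)
  have hKcpt : IsCompact (K 0) := by
    apply WeakDual.isCompact_of_bounded_of_closed _ (hKcl 0)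
    apply Bornology.IsBounded.subset (Metric.isBounded_closedBall (x := (0 : StrongDual ℝ V)) (r := 1))
    intro f hf
    obtain ⟨h1, h2, _, _⟩ := hf
    have hstate : IsState C u (f.toLinearMap) := ⟨fun a ha => h1 a ha, h2⟩
    have : ‖f‖ ≤ 1 := by
      refine ContinuousLinearMap.opNorm_le_bound f zero_le_one (fun x => ?_)
      rw [one_mul, Real.norm_eq_abs]
      exact h.state_abs_le f.toLinearMap hstate x
    simpa [Metric.mem_closedBall, dist_zero_right] using this
  obtain ⟨ψ, hψ⟩ := IsCompact.nonempty_iInter_of_sequence_nonempty_isCompact_isClosed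
    K hKdec hKne hKcpt hKcl
  have hmemall : ∀ n : ℕ, ψ ∈ K n := fun n => mem_iInter.1 hψ n
  obtain ⟨hψC, hψu, _, hψw⟩ := hmemall 0
  have hψη : ψ η = 0 := by
    refine le_antisymm ?_ (hψC η hηC)
    by_contra hc
    push_neg at hc
    obtain ⟨n, hn⟩ := exists_nat_gt (1 / ψ η)
    have h1 : 1 / (n + 1 : ℝ) < ψ η := by
      rw [div_lt_iff₀ (by positivity)]
      rw [div_lt_iff₀ hc] at hn
      nlinarith
    exact absurd ((hmemall n).2.2.1) (not_le.2 h1)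
  obtain ⟨φ₀, _, huniq⟩ := hsm η hη hη0
  have e1 : φ = φ₀ := huniq φ ⟨hφ, hφη⟩
  have e2 : (ψ : V →L[ℝ] ℝ).toLinearMap = φ₀ :=
    huniq _ ⟨⟨fun a ha => hψC a ha, hψu⟩, hψη⟩
  have : φ w = ψ w := by rw [e1, ← e2]; rfl
  linarith [hw, hψw, this ▸ hw]

lemma Mratio_unit {C : Set V} {u : V} (h : IsOrderUnitSpace C u)
    {η : V} (hηC : η ∈ C) {φ : V →ₗ[ℝ] ℝ} (hφ : IsState C u φ) (hφη : φ η = 0)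
    {s : ℝ} (hs : 0 < s) (hs1 : s ≤ 1) :
    Mratio C u ((1 - s) • η + s • u) = 1 / s := by
  set y : V := (1 - s) • η + s • u with hy
  have hyC : y ∈ C :=
    h.add_mem (h.smul_mem (1 - s) (by linarith) η hηC) (h.smul_mem s hs.le u h.unit_mem)
  have hφy : φ y = s := by
    simp [hy, map_add, map_smul, hφη, hφ.2]
  have hset : {b : ℝ | 0 < b ∧ b • y - u ∈ C} = Ici (1 / s) := by
    ext b
    simp only [mem_setOf_eq, mem_Ici]
    constructor
    · rintro ⟨hb, hm⟩
      have := hφ.1 _ hm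
      rw [map_sub, map_smul, hφy, hφ.2, smul_eq_mul] at this
      rw [div_le_iff₀ hs]
      linarith
    · intro hb
      have hb0 : 0 < b := lt_of_lt_of_le (by positivity) hb
      refine ⟨hb0, ?_⟩
      have e1 : b • y - u = ((1/s) • y - u) + (b - 1/s) • y := by module
      have e2 : (1/s) • y - u = ((1/s) * (1 - s)) • η + ((1/s) * s) • u - u := by
        rw [hy]; module
      have e3 : (1/s) * s = 1 := by field_simp
      rw [e3, one_smul] at e2
      have e4 : ((1/s) * (1 - s)) • η + u - u = ((1/s) * (1 - s)) • η := by abel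
      rw [e4] at e2
      have m1 : (1/s) • y - u ∈ C := by
        rw [e2]
        exact h.smul_mem _ (mul_nonneg (by positivity) (by linarith)) η hηC
      rw [e1]
      exact h.add_mem m1 (h.smul_mem _ (by linarith) y hyC)
  rw [Mratio, hset, csInf_Ici]


/-- **Proposition** (horofunction limit). In an order unit space with a smooth
cone, `lim_{s→0⁺} M(z_s/y_s) M(u/y_s)⁻¹ = φ(z)` where `y_s = (1−s)η + su` and
`z_s = (1−s)z + su`. -/
theorem Mratio_quotient_tendsto_state
    (C : Set V) (u : V) (hous : IsOrderUnitSpace C u) (hsm : SmoothCone C u)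
    (η : V) (hη : η ∈ frontier C) (hη0 : η ≠ 0)
    (φ : V →ₗ[ℝ] ℝ) (hφ : IsState C u φ) (hφη : φ η = 0)
    (z : V) (hz : z ∈ C) (hφz : 0 < φ z) :
    Tendsto (fun s : ℝ =>
        Mratio C ((1 - s) • z + s • u) ((1 - s) • η + s • u) *
          (Mratio C u ((1 - s) • η + s • u))⁻¹)
      (𝓝[>] (0:ℝ)) (𝓝 (φ z)) := by
  have hηC : η ∈ C := hous.isClosed.frontier_subset hη
  rw [Metric.tendsto_nhdsWithin_nhds]
  intro ε hε
  set w : V := (φ z + ε/4) • u - z with hw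
  have hφw : 0 < φ w := by
    have : φ w = ε/4 := by
      rw [hw, map_sub, map_smul, hφ.2, smul_eq_mul, mul_one]; ring
    rw [this]; positivity
  obtain ⟨t₀, ht₀, hkey⟩ := exists_forall_smul_eta_add_mem hous hsm hη hη0 hφ hφη hφw
  clear_value w
  have hzε : 0 < φ z + ε/4 := by positivity
  set δ : ℝ := min (min (1/2) ((φ z + ε/4)/(2*t₀))) (min (ε/4) (ε/(2*(φ z + 1)))) with hδ
  have hδ0 : 0 < δ := by
    refine lt_min (lt_min (by norm_num) (by positivity)) (lt_min (by positivity) (by positivity))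
  refine ⟨δ, hδ0, fun s hsmem hsd => ?_⟩
  have hs : 0 < s := hsmem
  have hsδ : s < δ := by rwa [Real.dist_eq, sub_zero, abs_of_pos hs] at hsd
  have hs2 : s < 1/2 := lt_of_lt_of_le hsδ (le_trans (min_le_left _ _) (min_le_left _ _))
  have hs3 : s < (φ z + ε/4)/(2*t₀) :=
    lt_of_lt_of_le hsδ (le_trans (min_le_left _ _) (min_le_right _ _))
  have hs4 : s < ε/4 := lt_of_lt_of_le hsδ (le_trans (min_le_right _ _) (min_le_left _ _))
  have hs5 : s < ε/(2*(φ z + 1)) :=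
    lt_of_lt_of_le hsδ (le_trans (min_le_right _ _) (min_le_right _ _))
  set y : V := (1 - s) • η + s • u with hy
  set zs : V := (1 - s) • z + s • u with hzs
  have hMu : Mratio C u y = 1/s := Mratio_unit hous hηC hφ hφη hs (by linarith)
  clear_value y zs
  set b : ℝ := 1 + (1 - s)*(φ z + ε/4)/s with hbdef
  clear_value b
  have hb0 : 0 < b := by
    rw [hbdef]
    have : 0 ≤ (1 - s)*(φ z + ε/4)/s := div_nonneg (mul_nonneg (by linarith) hzε.le) hs.le
    linarith
  have hb_ge : t₀ ≤ b := by
    have h1 : (1/2) * (φ z + ε/4) / s ≤ (1 - s)*(φ z + ε/4)/s := by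
      gcongr
      linarith
    have h2 : t₀ ≤ (1/2) * (φ z + ε/4) / s := by
      rw [le_div_iff₀ hs]
      rw [lt_div_iff₀ (by positivity : (0:ℝ) < 2*t₀)] at hs3
      nlinarith
    calc t₀ ≤ (1/2) * (φ z + ε/4) / s := h2
      _ ≤ (1 - s)*(φ z + ε/4)/s := h1
      _ ≤ b := by rw [hbdef]; linarith
  have hbη : b • η + w ∈ C := hkey b hb_ge
  have hb' : s*(b - 1) = (1 - s)*(φ z + ε/4) := by
    rw [hbdef]; field_simp; ring
  have e : b • y - zs = (b*(1 - s)) • η + (s*(b - 1)) • u - (1 - s) • z := by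
    rw [hy, hzs]; module
  rw [hb'] at e
  have e2 : (b*(1 - s)) • η + ((1 - s)*(φ z + ε/4)) • u - (1 - s) • z
      = (1 - s) • (b • η + w) := by rw [hw]; module
  rw [e2] at e
  have hb_mem : b ∈ {c : ℝ | 0 < c ∧ c • y - zs ∈ C} :=
    ⟨hb0, by rw [e]; exact hous.smul_mem _ (by linarith) _ hbη⟩
  have hbdd : BddBelow {c : ℝ | 0 < c ∧ c • y - zs ∈ C} := ⟨0, fun c hc => hc.1.le⟩
  set M : ℝ := Mratio C zs y with hM
  have hub : M ≤ b := csInf_le hbdd hb_mem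
  have hlb : ((1 - s)*(φ z) + s)/s ≤ M := by
    refine le_csInf ⟨b, hb_mem⟩ (fun c hc => ?_)
    have := hφ.1 _ hc.2
    rw [map_sub, map_smul, smul_eq_mul] at this
    have hφy : φ y = s := by simp [hy, map_add, map_smul, hφη, hφ.2]
    have hφzs : φ zs = (1 - s)*(φ z) + s := by
      simp [hzs, map_add, map_smul, hφ.2]; try ring
    rw [hφy, hφzs] at this
    rw [div_le_iff₀ hs]
    linarith
  clear_value M
  have hlb' : (1 - s)*(φ z) + s ≤ M * s := by
    rw [div_le_iff₀ hs] at hlb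
    linarith
  have hub' : M * s ≤ s + (1 - s)*(φ z + ε/4) := by
    have := mul_le_mul_of_nonneg_right hub hs.le
    calc M * s ≤ b * s := this
      _ = s + s*(b-1) := by ring
      _ = s + (1 - s)*(φ z + ε/4) := by rw [hb']
  show dist (M * (Mratio C u y)⁻¹) (φ z) < ε
  rw [hMu, one_div, inv_inv, Real.dist_eq, abs_lt]
  clear_value δ
  clear hkey hbη hb_mem hbdd e e2 hδ hδ0 hsδ hw hφw hsd hsmem hη hη0 hz hφη hηC hsm hMu hy hzs hM hub hlb
  have hsφz : s * φ z < ε/2 := by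
    rw [lt_div_iff₀ (by positivity : (0:ℝ) < 2*(φ z + 1))] at hs5
    nlinarith [hs.le, hφz]
  constructor
  · linarith
  · nlinarith [mul_nonneg hs.le hzε.le]
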